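/- Let E be the vector space ℓ∞ of bounded real sequences equipped with the topology induced from the product topology on ℝ^ω = (ℕ → ℝ). The map T : E → 𝕋^ω defined coordinatewise by sending x = (x_n) to the sequence of residues (x_n mod ℤ)_n (equivalently, (e^{2πi x_n})_n) is a group homomorphism that is continuous, surjective, and an open map; hence E has 𝕋^ω as a quotient group. -/

import Mathlib

/-- `ℓ∞`, the space of bounded real sequences, as a linear subspace of `ℝ^ω = ℕ → ℝ`;
as a topological space it carries the topology induced from the product topology. -/
def boundedSequences : Submodule ℝ (ℕ → ℝ) where
  carrier := { x | ∃ C : ℝ, ∀ n : ℕ, |x n| ≤ C }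
  zero_mem' := ⟨0, fun n => by simp⟩
  add_mem' := by
    rintro x y ⟨C, hC⟩ ⟨D, hD⟩
    exact ⟨C + D, fun n => (abs_add_le _ _).trans (add_le_add (hC n) (hD n))⟩
  smul_mem' := by
    rintro c x ⟨C, hC⟩
    exact ⟨|c| * C, fun n => by
      rw [Pi.smul_apply, smul_eq_mul, abs_mul]
      exact mul_le_mul_of_nonneg_left (hC n) (abs_nonneg c)⟩

/-- Let `E = ℓ∞` with the topology induced from the product topology on `ℝ^ω`.
The coordinatewise reduction map `T : E → 𝕋^ω`, `(x_n)_n ↦ (x_n mod ℤ)_n`, is a group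
homomorphism which is continuous, surjective and open; hence `E` has `𝕋^ω` as a
quotient group. -/
theorem linfty_product_topology_has_torus_quotient :
    ∃ T : boundedSequences →+ (ℕ → AddCircle (1 : ℝ)),
      (∀ (x : boundedSequences) (n : ℕ), T x n = ((x : ℕ → ℝ) n : AddCircle (1 : ℝ))) ∧
      Continuous T ∧ Function.Surjective T ∧ IsOpenMap T := by
  -- representative in [0,1) of a point of the circle
  set rep : AddCircle (1:ℝ) → ℝ := fun z => (AddCircle.equivIco 1 0 z : ℝ) with hrep
  have hrep_mem : ∀ z, rep z ∈ Set.Ico (0:ℝ) (0+1) := fun z => (AddCircle.equivIco 1 0 z).2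
  have hrep_coe : ∀ z, ((rep z : ℝ) : AddCircle (1:ℝ)) = z := fun z =>
    (AddCircle.equivIco 1 0).symm_apply_apply z
  have hrep_abs : ∀ z, |rep z| ≤ 1 := by
    intro z
    have h := hrep_mem z
    rw [abs_le]
    constructor <;> [linarith [h.1]; linarith [h.2]]
  refine ⟨{ toFun := fun x n => ((x : ℕ → ℝ) n : AddCircle (1:ℝ)),
            map_zero' := by funext n; simp,
            map_add' := by intro x y; funext n; push_cast; simp }, fun x n => rfl, ?_, ?_, ?_⟩
  · exact continuous_pi fun n =>
      (AddCircle.continuous_mk' 1).comp ((continuous_apply n).comp continuous_subtype_val)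
  · intro z
    refine ⟨⟨fun n => rep (z n), 1, fun n => hrep_abs _⟩, ?_⟩
    funext n
    exact hrep_coe (z n)
  · -- openness
    intro U hU
    rw [isOpen_induced_iff] at hU
    obtain ⟨V, hV, rfl⟩ := hU
    rw [isOpen_iff_forall_mem_open]
    rintro w ⟨x, hxU, rfl⟩
    obtain ⟨I, u, hu, hsub⟩ := isOpen_pi_iff.mp hV _ hxU
    refine ⟨Set.pi ↑I fun n => ((↑) : ℝ → AddCircle (1:ℝ)) '' u n, ?_, ?_, ?_⟩
    · -- contained in image
      intro z hz
      choose r hr1 hr2 using fun n (hn : n ∈ (I : Set ℕ)) => hz n hn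
      classical
      set e : ℕ → ℝ := fun n => if hn : n ∈ (I : Set ℕ) then r n hn else rep (z n) with he
      have heb : e ∈ boundedSequences := by
        refine ⟨1 + ∑ n ∈ I, |e n|, fun n => ?_⟩
        by_cases hn : n ∈ I
        · have h1 : |e n| ≤ ∑ m ∈ I, |e m| :=
            Finset.single_le_sum (fun m _ => abs_nonneg (e m)) hn
          linarith
        · have : e n = rep (z n) := by simp [he, hn]
          have h2 : (0:ℝ) ≤ ∑ m ∈ I, |e m| := Finset.sum_nonneg fun m _ => abs_nonneg _
          rw [this]
          linarith [hrep_abs (z n)]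
      refine ⟨⟨e, heb⟩, ?_, ?_⟩
      · show e ∈ V
        apply hsub
        intro n hn
        simp only [he, dif_pos hn]
        exact hr1 n hn
      · funext n
        show ((e n : ℝ) : AddCircle (1:ℝ)) = z n
        by_cases hn : n ∈ (I : Set ℕ)
        · simp only [he, dif_pos hn]; exact hr2 n hn
        · simp only [he, dif_neg hn]; exact hrep_coe (z n)
    · exact isOpen_set_pi I.finite_toSet fun n hn =>
        QuotientAddGroup.isOpenMap_coe _ (hu n hn).1
    · intro n hn
      exact ⟨(x : ℕ → ℝ) n, (hu n hn).2, rfl⟩
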